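/- Let R be a symmetric n×n matrix with zero diagonal such that I - R is positive definite but ρ(|R|) ≥ 1. Then for γ = ρ(|R|) - 1 + ε with any ε > 0, the matrix J' = (1+γ)I - R is positive definite, walk-summable after normalization, and for Γ = γI the iteration x^{(t+1)} = J'^{-1}(h + γ x^{(t)}) converges to (I-R)^{-1} h for any h and any initialization. -/

import Mathlib

open Matrix Filter Pointwise

noncomputable def specRad {n : ℕ} (M : Matrix (Fin n) (Fin n) ℝ) : ℝ :=
  sSup ((fun z : ℂ => ‖z‖) '' spectrum ℂ (M.map Complex.ofReal))

theorem double_loop_converges {n : ℕ} (R : Matrix (Fin n) (Fin n) ℝ)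
    (hsym : R.IsSymm) (hdiag : ∀ i, R i i = 0)
    (hpd : (1 - R).PosDef)
    (hnws : 1 ≤ specRad (R.map (fun x => |x|)))
    (ε : ℝ) (hε : 0 < ε) (γ : ℝ) (hγ : γ = specRad (R.map (fun x => |x|)) - 1 + ε) :
    ((1 + γ) • (1 : Matrix (Fin n) (Fin n) ℝ) - R).PosDef ∧
    specRad ((((1 + γ)⁻¹ : ℝ) • R).map (fun x => |x|)) < 1 ∧
    ∀ (h : Fin n → ℝ) (x : ℕ → Fin n → ℝ),
      (∀ t, x (t + 1) =
        ((1 + γ) • (1 : Matrix (Fin n) (Fin n) ℝ) - R)⁻¹ *ᵥ (h + γ • x t)) →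
      Tendsto x atTop (nhds ((1 - R)⁻¹ *ᵥ h)) := by
  classical
  have hγpos : 0 < γ := by rw [hγ]; linarith
  have h1γ : (0:ℝ) < 1 + γ := by linarith
  set A : Matrix (Fin n) (Fin n) ℝ := (1 + γ) • (1 : Matrix (Fin n) (Fin n) ℝ) - R with hAdef
  have hA_eq : A = (1 - R) + γ • (1 : Matrix (Fin n) (Fin n) ℝ) := by
    rw [hAdef, add_smul, one_smul]; abel
  have hγ1 : (γ • (1 : Matrix (Fin n) (Fin n) ℝ)).PosSemidef := by
    have : (γ • (1 : Matrix (Fin n) (Fin n) ℝ)) = Matrix.diagonal (fun _ => γ) := by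
      ext i j
      by_cases hij : i = j <;> simp [Matrix.one_apply, Matrix.diagonal_apply, hij]
    rw [this]
    exact Matrix.PosSemidef.diagonal (by intro i; exact hγpos.le)
  have hApd : A.PosDef := by
    rw [hA_eq]; exact hpd.add_posSemidef hγ1
  refine ⟨hApd, ?_, ?_⟩
  · -- spectral radius after normalization
    have hc : (0:ℝ) < (1+γ)⁻¹ := inv_pos.mpr h1γ
    have hcC : ((1+γ)⁻¹ : ℂ) ≠ 0 := by
      simp only [ne_eq, inv_eq_zero]
      exact_mod_cast h1γ.ne'
    set E : Matrix (Fin n) (Fin n) ℂ := (R.map (fun x => |x|)).map Complex.ofReal with hE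
    have hmap : ((((1 + γ)⁻¹ : ℝ) • R).map (fun x => |x|)).map Complex.ofReal
        = (((1+γ)⁻¹ : ℝ) : ℂ) • E := by
      ext i j
      simp only [Matrix.map_apply, Matrix.smul_apply, smul_eq_mul, hE]
      rw [abs_mul, abs_of_pos hc]
      push_cast
      ring
    have hu : ((((1+γ)⁻¹ : ℝ) : ℂ)) ≠ 0 := by exact_mod_cast hcC
    set u : ℂˣ := Units.mk0 _ hu with hudef
    have hspec : spectrum ℂ ((((1+γ)⁻¹ : ℝ) : ℂ) • E) = u • spectrum ℂ E := by
      rw [← spectrum.unit_smul_eq_smul E u]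
      congr 1
    have habsc : ∀ w : ℂ, ‖(((1+γ)⁻¹:ℝ):ℂ) * w‖ = (1+γ)⁻¹ * ‖w‖ := by
      intro w
      rw [norm_mul, Complex.norm_real, Real.norm_eq_abs, abs_of_pos hc]
    have huw : ∀ w : ℂ, ‖u • w‖ = (1+γ)⁻¹ * ‖w‖ := by
      intro w
      rw [hudef, Units.smul_def, Units.val_mk0, smul_eq_mul, habsc]
    have himg : (fun z : ℂ => ‖z‖) '' (u • spectrum ℂ E)
        = ((1+γ)⁻¹ : ℝ) • ((fun z : ℂ => ‖z‖) '' spectrum ℂ E) := by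
      ext y
      constructor
      · rintro ⟨z, ⟨w, hw, rfl⟩, rfl⟩
        refine ⟨‖w‖, ⟨w, hw, rfl⟩, ?_⟩
        simp only [hudef, Units.val_mk0, smul_eq_mul, habsc]
      · rintro ⟨r, ⟨w, hw, rfl⟩, rfl⟩
        refine ⟨u • w, ⟨w, hw, rfl⟩, ?_⟩
        simp only [hudef, Units.smul_def, Units.val_mk0, smul_eq_mul, habsc]
    have hval : specRad ((((1 + γ)⁻¹ : ℝ) • R).map (fun x => |x|))
        = (1+γ)⁻¹ * specRad (R.map (fun x => |x|)) := by
      unfold specRad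
      rw [hmap, hspec, himg, Real.sSup_smul_of_nonneg hc.le, smul_eq_mul]
    rw [hval]
    have hρval : specRad (R.map (fun x => |x|)) = γ + 1 - ε := by linarith
    rw [hρval]
    have h1 : (1+γ)⁻¹ * (1+γ) = 1 := inv_mul_cancel₀ h1γ.ne'
    nlinarith [mul_pos hc hε]
  · -- convergence
    intro h x hx
    set xs : Fin n → ℝ := (1 - R)⁻¹ *ᵥ h with hxs
    have hdet1R : IsUnit (1 - R).det := (Matrix.isUnit_iff_isUnit_det _).mp hpd.isUnit
    have hdetA : IsUnit A.det := (Matrix.isUnit_iff_isUnit_det _).mp hApd.isUnit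
    have h1R : (1 - R) *ᵥ xs = h := by
      rw [hxs, Matrix.mulVec_mulVec, Matrix.mul_nonsing_inv _ hdet1R, Matrix.one_mulVec]
    have hfix : A *ᵥ xs = h + γ • xs := by
      rw [hA_eq, Matrix.add_mulVec, h1R, Matrix.smul_mulVec, Matrix.one_mulVec]
    have hfix' : xs = A⁻¹ *ᵥ (h + γ • xs) := by
      rw [← hfix, Matrix.mulVec_mulVec, Matrix.nonsing_inv_mul _ hdetA, Matrix.one_mulVec]
    set M : Matrix (Fin n) (Fin n) ℝ := γ • A⁻¹ with hMdef
    have hAinv : A⁻¹.PosDef := hApd.inv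
    have hMpd : M.PosDef := by
      refine Matrix.PosDef.of_dotProduct_mulVec_pos ?_ ?_
      · show Mᴴ = M
        rw [hMdef, Matrix.conjTranspose_smul, hAinv.1]
        simp
      · intro v hv
        have := hAinv.dotProduct_mulVec_pos hv
        rw [hMdef, Matrix.smul_mulVec, dotProduct_smul, smul_eq_mul]
        exact mul_pos hγpos this
    have hMh : M.IsHermitian := hMpd.1
    -- eigenvalues of M lie in (0, 1)
    have hev_pos : ∀ i, 0 < hMh.eigenvalues i := hMpd.eigenvalues_pos
    have hev_lt : ∀ i, hMh.eigenvalues i < 1 := by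
      intro i
      set v : Fin n → ℝ := ⇑(hMh.eigenvectorBasis i) with hvdef
      have hvne : v ≠ 0 := by
        intro hv0
        apply hMh.eigenvectorBasis.orthonormal.ne_zero i
        ext j
        exact congrFun hv0 j
      have hMv : M *ᵥ v = hMh.eigenvalues i • v := hMh.mulVec_eigenvectorBasis i
      have hAM : A * M = γ • 1 := by
        rw [hMdef, mul_smul_comm, Matrix.mul_nonsing_inv _ hdetA]
      have hAv : hMh.eigenvalues i • (A *ᵥ v) = γ • v := by
        have := congrArg (fun w => A *ᵥ w) hMv
        simp only [Matrix.mulVec_smul] at this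
        rw [← this, Matrix.mulVec_mulVec, hAM, Matrix.smul_mulVec, Matrix.one_mulVec]
      have hs : 0 < v ⬝ᵥ v := by
        have := Matrix.dotProduct_star_self_pos_iff (v := v) |>.mpr hvne
        simpa using this
      have hq1 : 0 < v ⬝ᵥ ((1 - R) *ᵥ v) := by
        have := hpd.dotProduct_mulVec_pos hvne
        simpa using this
      have hqA : v ⬝ᵥ (A *ᵥ v) = v ⬝ᵥ ((1 - R) *ᵥ v) + γ * (v ⬝ᵥ v) := by
        rw [hA_eq, Matrix.add_mulVec, dotProduct_add, Matrix.smul_mulVec,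
          Matrix.one_mulVec, dotProduct_smul, smul_eq_mul]
      have heq : hMh.eigenvalues i * (v ⬝ᵥ (A *ᵥ v)) = γ * (v ⬝ᵥ v) := by
        have := congrArg (fun w => v ⬝ᵥ w) hAv
        simpa [dotProduct_smul, smul_eq_mul] using this
      nlinarith [hev_pos i, mul_pos hγpos hs]
    -- spectral decomposition of M
    set U : Matrix (Fin n) (Fin n) ℝ := (hMh.eigenvectorUnitary : Matrix (Fin n) (Fin n) ℝ)
      with hUdef
    set D : Matrix (Fin n) (Fin n) ℝ := Matrix.diagonal hMh.eigenvalues with hDdef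
    have hspecM : M = U * D * star U := by
      have h0 := hMh.spectral_theorem
      have hcomp : RCLike.ofReal ∘ hMh.eigenvalues = hMh.eigenvalues := by
        funext i
        simp [RCLike.ofReal_real_eq_id]
      rw [hcomp] at h0
      exact h0
    have hUstar : U * star U = 1 := (Matrix.mem_unitaryGroup_iff).mp hMh.eigenvectorUnitary.2
    have hstarU : star U * U = 1 := (Matrix.mem_unitaryGroup_iff').mp hMh.eigenvectorUnitary.2
    have key : ∀ t : ℕ, M ^ t = U * D ^ t * star U := by
      intro t
      induction t with
      | zero => simp [hUstar]
      | succ t ih =>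
        rw [pow_succ, pow_succ, ih]
        conv_lhs => rw [hspecM]
        calc U * D ^ t * star U * (U * D * star U)
            = U * D ^ t * (star U * U) * D * star U := by
              simp only [Matrix.mul_assoc]
          _ = U * (D ^ t * D) * star U := by rw [hstarU]; simp only [Matrix.mul_one,
              Matrix.mul_assoc]
    -- convergence of the error term
    have hcont : Continuous fun v : Fin n → ℝ => U * Matrix.diagonal v * star U :=
      (continuous_const.matrix_mul continuous_id.matrix_diagonal).matrix_mul continuous_const
    have hd0 : Tendsto (fun t : ℕ => fun i => (hMh.eigenvalues i) ^ t) atTop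
        (nhds (0 : Fin n → ℝ)) := by
      rw [tendsto_pi_nhds]
      intro i
      have habs : |hMh.eigenvalues i| < 1 := by
        rw [abs_lt]; exact ⟨by linarith [hev_pos i], hev_lt i⟩
      simpa using tendsto_pow_atTop_nhds_zero_of_abs_lt_one habs
    have hMt : Tendsto (fun t : ℕ => M ^ t) atTop (nhds 0) := by
      have h1 : Tendsto (fun t : ℕ => U * Matrix.diagonal (fun i => (hMh.eigenvalues i) ^ t)
          * star U) atTop (nhds (U * Matrix.diagonal (0 : Fin n → ℝ) * star U)) :=
        (hcont.tendsto _).comp hd0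
      have h2 : (fun t : ℕ => U * Matrix.diagonal (fun i => (hMh.eigenvalues i) ^ t) * star U)
          = fun t : ℕ => M ^ t := by
        funext t
        rw [key t, hDdef, Matrix.diagonal_pow]
        rfl
      rw [h2] at h1
      have hdz : Matrix.diagonal (0 : Fin n → ℝ) = 0 := Matrix.diagonal_zero
      rw [hdz, Matrix.mul_zero, Matrix.zero_mul] at h1
      exact h1
    have hx_eq : ∀ t, x t = xs + (M ^ t) *ᵥ (x 0 - xs) := by
      intro t
      induction t with
      | zero => simp
      | succ t ih =>
        rw [hx t, ih]
        have hsplit : h + γ • (xs + (M ^ t) *ᵥ (x 0 - xs))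
            = (h + γ • xs) + γ • ((M ^ t) *ᵥ (x 0 - xs)) := by
          rw [smul_add]; abel
        rw [hsplit, Matrix.mulVec_add, ← hfix', Matrix.mulVec_smul]
        congr 1
        rw [← Matrix.smul_mulVec, ← hMdef, Matrix.mulVec_mulVec, ← pow_succ']
    have hxfun : x = fun t => xs + (M ^ t) *ᵥ (x 0 - xs) := funext hx_eq
    rw [hxfun]
    have hlim : Tendsto (fun t : ℕ => xs + (M ^ t) *ᵥ (x 0 - xs)) atTop
        (nhds (xs + (0 : Matrix (Fin n) (Fin n) ℝ) *ᵥ (x 0 - xs))) :=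
      tendsto_const_nhds.add
        (((continuous_id.matrix_mulVec continuous_const).tendsto 0).comp hMt)
    simpa using hlim
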